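/- Assume the standing setup, and let E be the number of U-rich directions. Then Σ_{m U-rich} c_m ≥ (p - n)·N/2 - (1 - 1/(n + 1))·r·(p - r) + (n - 1)·N·E/2, where the sum runs over all U-rich directions m (inequality in ℚ). -/

import Mathlib

open Finset Polynomial

attribute [local instance] Classical.propDecidable

/-- The line in `(ZMod p)²` with slope `m` (where `none` denotes the vertical
slope `∞`) and "intercept" `c`. -/
noncomputable def lineWithSlope (p : ℕ) [NeZero p] (m : Option (ZMod p)) (c : ZMod p) :
    Finset (ZMod p × ZMod p) :=
  match m with
  | some m => Finset.univ.filter fun q => q.2 = m * q.1 + c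
  | none => Finset.univ.filter fun q => q.1 = c

/-- `ℓ` is `U`-rich: it meets `U` in at least `#U/p + 1` points. -/
def IsRich (p : ℕ) (U ℓ : Finset (ZMod p × ZMod p)) : Prop :=
  (U.card : ℚ) / p + 1 ≤ ((ℓ ∩ U).card : ℚ)

/-- `ℓ` is `U`-poor: it meets `U` in at most `#U/p - 1` points. -/
def IsPoor (p : ℕ) (U ℓ : Finset (ZMod p × ZMod p)) : Prop :=
  ((ℓ ∩ U).card : ℚ) ≤ (U.card : ℚ) / p - 1

/-- `m` is a `U`-rich direction: some line with slope `m` is `U`-rich. -/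
def IsRichDir (p : ℕ) [NeZero p] (U : Finset (ZMod p × ZMod p))
    (m : Option (ZMod p)) : Prop :=
  ∃ c : ZMod p, IsRich p U (lineWithSlope p m c)

/-- `m` is a `U`-special direction: some line with slope `m` is `U`-rich or `U`-poor. -/
def IsSpecialDir (p : ℕ) [NeZero p] (U : Finset (ZMod p × ZMod p))
    (m : Option (ZMod p)) : Prop :=
  ∃ c : ZMod p, IsRich p U (lineWithSlope p m c) ∨ IsPoor p U (lineWithSlope p m c)

/-- `c_m`: the number of unordered pairs of distinct points of `U` lying on a common
line with slope `m`. -/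
noncomputable def pairsCount (p : ℕ) [NeZero p] (U : Finset (ZMod p × ZMod p))
    (m : Option (ZMod p)) : ℕ :=
  ((U.powersetCard 2).filter fun s => ∃ c : ZMod p, s ⊆ lineWithSlope p m c).card

/-- The set of `U`-rich lines, identified with pairs (slope, intercept). -/
noncomputable def richLines (p : ℕ) [NeZero p] (U : Finset (ZMod p × ZMod p)) :
    Finset (Option (ZMod p) × ZMod p) :=
  Finset.univ.filter fun q => IsRich p U (lineWithSlope p q.1 q.2)

/-- The set of `U`-rich directions, as a finset. -/
noncomputable def richDirs (p : ℕ) [NeZero p] (U : Finset (ZMod p × ZMod p)) :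
    Finset (Option (ZMod p)) :=
  Finset.univ.filter fun m => IsRichDir p U m

/-- `w_m`: the number of `U`-rich lines with slope `m`. -/
noncomputable def wSlope (p : ℕ) [NeZero p] (U : Finset (ZMod p × ZMod p))
    (m : Option (ZMod p)) : ℕ :=
  (Finset.univ.filter fun c : ZMod p => IsRich p U (lineWithSlope p m c)).card


section AuxLemmas

/-- The "intercept" of a point w.r.t. slope `m`: the unique `c` with the point
on the line of slope `m` and intercept `c`. -/
noncomputable def interceptOf (p : ℕ) [NeZero p] (m : Option (ZMod p))
    (q : ZMod p × ZMod p) : ZMod p :=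
  match m with
  | some m => q.2 - m * q.1
  | none => q.1

lemma mem_lineWithSlope (p : ℕ) [NeZero p] {m : Option (ZMod p)} {c : ZMod p}
    {q : ZMod p × ZMod p} : q ∈ lineWithSlope p m c ↔ interceptOf p m q = c := by
  cases m with
  | none => simp [lineWithSlope, interceptOf]
  | some m => simp [lineWithSlope, interceptOf, sub_eq_iff_eq_add']

lemma sum_line_inter (p : ℕ) [NeZero p] (U : Finset (ZMod p × ZMod p))
    (m : Option (ZMod p)) :
    ∑ c : ZMod p, (lineWithSlope p m c ∩ U).card = U.card := by
  have h := Finset.card_eq_sum_card_fiberwise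
    (f := interceptOf p m) (s := U) (t := Finset.univ) (fun q _ => Finset.mem_univ _)
  rw [h]
  refine Finset.sum_congr rfl fun c _ => ?_
  congr 1
  ext q
  simp [mem_lineWithSlope, Finset.mem_filter, Finset.mem_inter, and_comm]

lemma slope_unique (p : ℕ) [Fact p.Prime] {m m' : Option (ZMod p)} {c c' : ZMod p}
    {a b : ZMod p × ZMod p} (hab : a ≠ b)
    (ha : a ∈ lineWithSlope p m c) (hb : b ∈ lineWithSlope p m c)
    (ha' : a ∈ lineWithSlope p m' c') (hb' : b ∈ lineWithSlope p m' c') : m = m' := by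
  cases m with
  | none => cases m' with
    | none => rfl
    | some m₂ =>
      exfalso
      simp only [lineWithSlope, Finset.mem_filter, Finset.mem_univ, true_and] at ha hb ha' hb'
      apply hab
      have h1 : a.1 = b.1 := by rw [ha, hb]
      have h2 : a.2 = b.2 := by rw [ha', hb', h1]
      exact Prod.ext h1 h2
  | some m₁ => cases m' with
    | none =>
      exfalso
      simp only [lineWithSlope, Finset.mem_filter, Finset.mem_univ, true_and] at ha hb ha' hb'
      apply hab
      have h1 : a.1 = b.1 := by rw [ha', hb']
      have h2 : a.2 = b.2 := by rw [ha, hb, h1]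
      exact Prod.ext h1 h2
    | some m₂ =>
      simp only [lineWithSlope, Finset.mem_filter, Finset.mem_univ, true_and] at ha hb ha' hb'
      by_contra hne
      have hm : m₁ ≠ m₂ := fun h => hne (by rw [h])
      apply hab
      have key : (m₁ - m₂) * a.1 = (m₁ - m₂) * b.1 := by
        have e1 : m₁ * a.1 + c = m₂ * a.1 + c' := by rw [← ha, ← ha']
        have e2 : m₁ * b.1 + c = m₂ * b.1 + c' := by rw [← hb, ← hb']
        ring_nf
        linear_combination e1 - e2
      have h1 : a.1 = b.1 := mul_left_cancel₀ (sub_ne_zero.mpr hm) key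
      have h2 : a.2 = b.2 := by rw [ha, hb, h1]
      exact Prod.ext h1 h2

lemma exists_slope (p : ℕ) [Fact p.Prime] {a b : ZMod p × ZMod p} (hab : a ≠ b) :
    ∃ m c, a ∈ lineWithSlope p m c ∧ b ∈ lineWithSlope p m c := by
  by_cases h1 : a.1 = b.1
  · exact ⟨none, a.1, by simp [lineWithSlope], by simp [lineWithSlope, h1]⟩
  · have hd : b.1 - a.1 ≠ 0 := sub_ne_zero.mpr (Ne.symm h1)
    refine ⟨some ((b.2 - a.2) / (b.1 - a.1)),
      a.2 - (b.2 - a.2) / (b.1 - a.1) * a.1, ?_, ?_⟩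
    · simp only [lineWithSlope, Finset.mem_filter, Finset.mem_univ, true_and]
      ring
    · simp only [lineWithSlope, Finset.mem_filter, Finset.mem_univ, true_and]
      field_simp
      ring

lemma pairsCount_eq_sum (p : ℕ) [NeZero p] (U : Finset (ZMod p × ZMod p))
    (m : Option (ZMod p)) :
    pairsCount p U m = ∑ c : ZMod p, ((lineWithSlope p m c ∩ U).card).choose 2 := by
  rw [pairsCount]
  have heq : (U.powersetCard 2).filter (fun s => ∃ c, s ⊆ lineWithSlope p m c)
      = Finset.univ.biUnion (fun c => (lineWithSlope p m c ∩ U).powersetCard 2) := by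
    ext s
    simp only [Finset.mem_filter, Finset.mem_biUnion, Finset.mem_powersetCard,
      Finset.mem_univ, true_and]
    constructor
    · rintro ⟨⟨hsU, hs2⟩, c, hsc⟩
      exact ⟨c, fun x hx => Finset.mem_inter.mpr ⟨hsc hx, hsU hx⟩, hs2⟩
    · rintro ⟨c, hsub, hs2⟩
      exact ⟨⟨fun x hx => (Finset.mem_inter.mp (hsub hx)).2, hs2⟩,
        c, fun x hx => (Finset.mem_inter.mp (hsub hx)).1⟩
  rw [heq, Finset.card_biUnion]
  · exact Finset.sum_congr rfl fun c _ => Finset.card_powersetCard 2 _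
  · intro c _ c' _ hcc
    simp only [Function.onFun]; rw [Finset.disjoint_left]
    intro s hs hs'
    rw [Finset.mem_powersetCard] at hs hs'
    obtain ⟨a, ha⟩ := Finset.card_pos.mp (by rw [hs.2]; norm_num : 0 < s.card)
    have h1 : a ∈ lineWithSlope p m c := (Finset.mem_inter.mp (hs.1 ha)).1
    have h2 : a ∈ lineWithSlope p m c' := (Finset.mem_inter.mp (hs'.1 ha)).1
    rw [mem_lineWithSlope] at h1 h2
    exact hcc (h1 ▸ h2)

/-- The slope of the (unique) line through the two points of `s`, when it exists. -/
noncomputable def dirOf (p : ℕ) [NeZero p] (s : Finset (ZMod p × ZMod p)) :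
    Option (ZMod p) :=
  if h : ∃ mc : Option (ZMod p) × ZMod p, s ⊆ lineWithSlope p mc.1 mc.2
  then h.choose.1 else none

lemma dirOf_eq_iff (p : ℕ) [Fact p.Prime] {s : Finset (ZMod p × ZMod p)}
    (hs : s.card = 2) (m : Option (ZMod p)) :
    dirOf p s = m ↔ ∃ c, s ⊆ lineWithSlope p m c := by
  obtain ⟨a, b, hab, rfl⟩ := Finset.card_eq_two.mp hs
  obtain ⟨m₀, c₀, ha₀, hb₀⟩ := exists_slope p hab
  have hex : ∃ mc : Option (ZMod p) × ZMod p,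
      ({a, b} : Finset _) ⊆ lineWithSlope p mc.1 mc.2 := by
    refine ⟨(m₀, c₀), ?_⟩
    intro x hx
    rcases Finset.mem_insert.mp hx with rfl | hx
    · exact ha₀
    · rw [Finset.mem_singleton.mp hx]; exact hb₀
  rw [dirOf, dif_pos hex]
  have hspec := hex.choose_spec
  constructor
  · rintro rfl
    exact ⟨hex.choose.2, hspec⟩
  · rintro ⟨c, hc⟩
    exact slope_unique p hab (hspec (Finset.mem_insert_self a _))
      (hspec (by simp)) (hc (Finset.mem_insert_self a _)) (hc (by simp))

lemma sum_pairsCount (p : ℕ) [Fact p.Prime] (U : Finset (ZMod p × ZMod p)) :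
    ∑ m : Option (ZMod p), pairsCount p U m = U.card.choose 2 := by
  have h := Finset.card_eq_sum_card_fiberwise (f := dirOf p) (s := U.powersetCard 2)
      (t := Finset.univ) (fun s _ => Finset.mem_univ _)
  rw [Finset.card_powersetCard] at h
  rw [h]
  refine Finset.sum_congr rfl fun m _ => ?_
  unfold pairsCount
  congr 1
  refine Finset.filter_congr fun s hs => ?_
  rw [Finset.mem_powersetCard] at hs
  exact (dirOf_eq_iff p hs.2 m).symm

end AuxLemmas

set_option maxHeartbeats 1600000 in
theorem sum_cm_lower_bound (p n r : ℕ) [Fact p.Prime]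
    (U : Finset (ZMod p × ZMod p))
    (hn : 1 ≤ n) (hnp : n < p) (hr : r + n < p)
    (hcard : (U.card : ℤ) = n * p - r)
    (hlines : ¬ ∃ L : Fin n → Option (ZMod p) × ZMod p,
      ∀ u ∈ U, ∃ i : Fin n, u ∈ lineWithSlope p (L i).1 (L i).2)
    (hD : (({m : Option (ZMod p) | IsSpecialDir p U m}.ncard : ℚ))
        ≤ 1 + ((p : ℚ) - r) / (n + 1)) :
    ((p : ℚ) - n) * U.card / 2
      - (1 - 1 / ((n : ℚ) + 1)) * r * ((p : ℚ) - r)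
      + ((n : ℚ) - 1) * U.card * ((richDirs p U).card : ℚ) / 2
    ≤ ∑ m ∈ richDirs p U, (pairsCount p U m : ℚ) := by
  classical
  have hp : 0 < p := (Fact.out : p.Prime).pos
  have hpq : (0:ℚ) < p := by exact_mod_cast hp
  have hNq : (U.card : ℚ) = n * p - r := by exact_mod_cast hcard
  have hrp : r < p := lt_of_le_of_lt (Nat.le_add_right r n) hr
  have hrq : (r:ℚ) < p := by exact_mod_cast hrp
  have hnq : (1:ℚ) ≤ n := by exact_mod_cast hn
  have hr0 : (0:ℚ) ≤ r := by positivity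
  -- θ bounds
  have hNp_le : (U.card:ℚ)/p ≤ n := by rw [div_le_iff₀ hpq]; nlinarith
  have hNp_gt : (n:ℚ) - 1 < (U.card:ℚ)/p := by rw [lt_div_iff₀ hpq]; nlinarith
  -- casted pairsCount
  have hpc : ∀ m : Option (ZMod p), (pairsCount p U m : ℚ)
      = ∑ c : ZMod p, (((lineWithSlope p m c ∩ U).card : ℚ)
          * ((lineWithSlope p m c ∩ U).card - 1)) / 2 := by
    intro m
    rw [pairsCount_eq_sum, Nat.cast_sum]
    exact Finset.sum_congr rfl fun c _ => by rw [Nat.cast_choose_two]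
  have hksum : ∀ m : Option (ZMod p),
      ∑ c : ZMod p, ((lineWithSlope p m c ∩ U).card : ℚ) = U.card := by
    intro m; exact_mod_cast sum_line_inter p U m
  -- B1 : non-rich directions
  have B1 : ∀ m : Option (ZMod p), ¬ IsRichDir p U m →
      (pairsCount p U m : ℚ) ≤ (U.card : ℚ) * ((n:ℚ)-1)/2 := by
    intro m hm
    have hk : ∀ c : ZMod p, ((lineWithSlope p m c ∩ U).card : ℚ) ≤ n := by
      intro c
      by_contra hlt
      push_neg at hlt
      have hk' : n + 1 ≤ (lineWithSlope p m c ∩ U).card := by exact_mod_cast hlt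
      exact hm ⟨c, le_trans (by push_cast; linarith) (by exact_mod_cast hk' : ((n:ℚ)+1) ≤ _)⟩
    rw [hpc]
    calc ∑ c : ZMod p, (((lineWithSlope p m c ∩ U).card : ℚ)
          * ((lineWithSlope p m c ∩ U).card - 1)) / 2
        ≤ ∑ c : ZMod p, ((lineWithSlope p m c ∩ U).card : ℚ) * ((n:ℚ)-1)/2 := by
          refine Finset.sum_le_sum fun c _ => ?_
          have h0 : (0:ℚ) ≤ ((lineWithSlope p m c ∩ U).card : ℚ) := by positivity
          have := hk c
          nlinarith
      _ = (U.card : ℚ) * ((n:ℚ)-1)/2 := by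
          rw [← Finset.sum_div, ← Finset.sum_mul, hksum]
  -- B2 : non-special directions
  have B2 : ∀ m : Option (ZMod p), ¬ IsSpecialDir p U m →
      (pairsCount p U m : ℚ) ≤ ((n:ℚ)-1) * ((U.card:ℚ) - r)/2 := by
    intro m hm
    have hk : ∀ c : ZMod p, ((n:ℚ) - 1 ≤ ((lineWithSlope p m c ∩ U).card : ℚ))
        ∧ ((lineWithSlope p m c ∩ U).card : ℚ) ≤ n := by
      intro c
      have hnr : ¬ (IsRich p U (lineWithSlope p m c) ∨ IsPoor p U (lineWithSlope p m c)) :=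
        fun h => hm ⟨c, h⟩
      push_neg at hnr
      obtain ⟨h1, h2⟩ := hnr
      rw [IsRich, not_le] at h1
      rw [IsPoor, not_le] at h2
      constructor
      · -- k > θ - 1 > n - 2 so k ≥ n - 1
        have h3 : ((n:ℚ)) - 2 < ((lineWithSlope p m c ∩ U).card : ℚ) := by
          have : (U.card:ℚ)/p > n - 1 := hNp_gt
          linarith
        have h4 : (n:ℤ) - 2 < ((lineWithSlope p m c ∩ U).card : ℤ) := by exact_mod_cast h3
        have h5 : (n:ℤ) - 1 ≤ ((lineWithSlope p m c ∩ U).card : ℤ) := by omega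
        exact_mod_cast h5
      · have h3 : ((lineWithSlope p m c ∩ U).card : ℚ) < n + 1 := by linarith
        have h4 : ((lineWithSlope p m c ∩ U).card : ℤ) < (n:ℤ) + 1 := by exact_mod_cast h3
        have h5 : ((lineWithSlope p m c ∩ U).card : ℤ) ≤ n := by omega
        exact_mod_cast h5
    rw [hpc]
    have step : ∑ c : ZMod p, (((lineWithSlope p m c ∩ U).card : ℚ)
          * ((lineWithSlope p m c ∩ U).card - 1)) / 2
        ≤ ∑ c : ZMod p, (((n:ℚ)-1)*((n:ℚ)-2)/2
            + (((lineWithSlope p m c ∩ U).card : ℚ) - ((n:ℚ)-1)) * ((n:ℚ)-1)) := by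
      refine Finset.sum_le_sum fun c _ => ?_
      obtain ⟨h1, h2⟩ := hk c
      nlinarith [mul_nonneg (sub_nonneg.mpr h2) (sub_nonneg.mpr h1)]
    refine le_trans step ?_
    have hcardZ : (Finset.univ : Finset (ZMod p)).card = p := by
      rw [Finset.card_univ, ZMod.card]
    rw [Finset.sum_add_distrib, Finset.sum_const, nsmul_eq_mul, hcardZ,
      ← Finset.sum_mul, Finset.sum_sub_distrib, Finset.sum_const, nsmul_eq_mul, hcardZ, hksum]
    rw [hNq]
    ring_nf
    nlinarith [hpq]
  -- sets
  set R := richDirs p U with hRdef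
  set S := Finset.univ.filter (fun m : Option (ZMod p) => IsSpecialDir p U m) with hSdef
  have hRS : R ⊆ S := by
    intro m hm
    rw [hRdef, richDirs, Finset.mem_filter] at hm
    rw [hSdef, Finset.mem_filter]
    obtain ⟨c, hc⟩ := hm.2
    exact ⟨Finset.mem_univ _, ⟨c, Or.inl hc⟩⟩
  have hDS : (S.card : ℚ) ≤ 1 + ((p:ℚ) - r)/((n:ℚ)+1) := by
    refine le_trans (le_of_eq ?_) hD
    congr 1
    rw [Set.ncard_eq_toFinset_card', Set.toFinset_setOf]
  have hoptcard : Fintype.card (Option (ZMod p)) = p + 1 := by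
    rw [Fintype.card_option, ZMod.card]
  have htot : ∑ m : Option (ZMod p), (pairsCount p U m : ℚ)
      = (U.card:ℚ) * ((U.card:ℚ) - 1)/2 := by
    have h : (∑ m : Option (ZMod p), (pairsCount p U m : ℚ)) = ((U.card.choose 2 : ℕ) : ℚ) := by
      exact_mod_cast congrArg (fun k : ℕ => (k:ℚ)) (sum_pairsCount p U)
    rw [h, Nat.cast_choose_two]
  have hsplit : ∑ m ∈ R, (pairsCount p U m : ℚ)
      = (∑ m : Option (ZMod p), (pairsCount p U m : ℚ))
        - ∑ m ∈ S \ R, (pairsCount p U m : ℚ) - ∑ m ∈ Sᶜ, (pairsCount p U m : ℚ) := by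
    have h1 : ∑ m ∈ S \ R, (pairsCount p U m : ℚ) + ∑ m ∈ R, (pairsCount p U m : ℚ)
        = ∑ m ∈ S, (pairsCount p U m : ℚ) := Finset.sum_sdiff hRS
    have h2 : ∑ m ∈ S, (pairsCount p U m : ℚ) + ∑ m ∈ Sᶜ, (pairsCount p U m : ℚ)
        = ∑ m : Option (ZMod p), (pairsCount p U m : ℚ) :=
      Finset.sum_add_sum_compl S _
    linarith
  have bSR : ∑ m ∈ S \ R, (pairsCount p U m : ℚ)
      ≤ ((S.card : ℚ) - R.card) * ((U.card:ℚ) * ((n:ℚ)-1)/2) := by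
    have h1 : ∑ m ∈ S \ R, (pairsCount p U m : ℚ)
        ≤ ∑ _m ∈ S \ R, (U.card:ℚ)*((n:ℚ)-1)/2 := by
      refine Finset.sum_le_sum fun m hm => B1 m ?_
      have h2 := (Finset.mem_sdiff.mp hm).2
      rw [hRdef, richDirs] at h2
      simpa using h2
    rw [Finset.sum_const, nsmul_eq_mul, Finset.card_sdiff_of_subset hRS,
      Nat.cast_sub (Finset.card_le_card hRS)] at h1
    exact h1
  have bSc : ∑ m ∈ Sᶜ, (pairsCount p U m : ℚ)
      ≤ ((p:ℚ) + 1 - S.card) * (((n:ℚ)-1) * ((U.card:ℚ) - r)/2) := by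
    have h1 : ∑ m ∈ Sᶜ, (pairsCount p U m : ℚ)
        ≤ ∑ _m ∈ Sᶜ, ((n:ℚ)-1)*((U.card:ℚ)-r)/2 := by
      refine Finset.sum_le_sum fun m hm => B2 m ?_
      have h2 := Finset.mem_compl.mp hm
      rw [hSdef] at h2
      simpa using h2
    rw [Finset.sum_const, nsmul_eq_mul, Finset.card_compl, hoptcard,
      Nat.cast_sub (le_trans (Finset.card_le_univ S) (le_of_eq hoptcard))] at h1
    push_cast at h1
    convert h1 using 2
  have hfac : (0:ℚ) ≤ (r:ℚ)*((n:ℚ)-1)/2 * (1 + ((p:ℚ)-r)/((n:ℚ)+1) - S.card) := by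
    apply mul_nonneg
    · apply div_nonneg (mul_nonneg hr0 (by linarith)) (by norm_num)
    · linarith [hDS]
  have hident : ((U.card:ℚ) * ((U.card:ℚ)-1)/2
      - ((S.card:ℚ) - R.card) * ((U.card:ℚ)*((n:ℚ)-1)/2)
      - ((p:ℚ)+1-S.card) * (((n:ℚ)-1)*((U.card:ℚ)-r)/2))
      - (((p : ℚ) - n) * U.card / 2
        - (1 - 1 / ((n : ℚ) + 1)) * r * ((p : ℚ) - r)
        + ((n : ℚ) - 1) * U.card * (R.card : ℚ) / 2)
      = (r:ℚ)*((n:ℚ)-1)/2 * (1 + ((p:ℚ)-r)/((n:ℚ)+1) - S.card) := by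
    rw [hNq]
    have hne : ((n:ℚ)+1) ≠ 0 := by positivity
    field_simp
    ring
  rw [hsplit, htot]
  linarith [bSR, bSc, hfac, hident]
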